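/- arXiv:2604.21945 — 2 statements merged into one kernel-verified Lean document; each statement's English description precedes it below -/
import Mathlib

section
/- Lawvere's fixed point theorem: In a category with finite products, if there exists an object A and a morphism φ : A → Y^A that is point-surjective (i.e., for every point q : 1 → Y^A there exists a point p : 1 → A with φ∘p = q), then every endomorphism t : Y → Y has a fixed point, i.e., there exists a point y : 1 → Y with t∘y = y. -/
open CategoryTheory CategoryTheory.Limits CategoryTheory.MonoidalCategory
open CategoryTheory.CartesianClosed

/-- Lawvere's fixed point theorem in a cartesian closed category: if
`φ : A ⟶ Y^A` is point-surjective then every `t : Y ⟶ Y` has a fixed point. -/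
theorem lawvere_fixed_point {C : Type*} [Category C] [CartesianMonoidalCategory C]
    [MonoidalClosed C] (A Y : C) (φ : A ⟶ A ⟹ Y)
    (hφ : ∀ q : 𝟙_ C ⟶ A ⟹ Y, ∃ p : 𝟙_ C ⟶ A, p ≫ φ = q)
    (t : Y ⟶ Y) : ∃ y : 𝟙_ C ⟶ Y, y ≫ t = y := by
  open CartesianMonoidalCategory MonoidalClosed in
  -- the "diagonal" map
  set f : A ⟶ Y := lift (𝟙 A) (𝟙 A) ≫ uncurry φ ≫ t with hf
  obtain ⟨p, hp⟩ := hφ (curry (fst A (𝟙_ C) ≫ f))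
  have h1 : (A ◁ p) ≫ uncurry φ = fst A (𝟙_ C) ≫ f := by
    rw [← uncurry_natural_left, hp, uncurry_curry]
  refine ⟨lift p p ≫ uncurry φ, ?_⟩
  have h2 : lift p (𝟙 (𝟙_ C)) ≫ (A ◁ p) = lift p p := by
    ext <;> simp
  have h3 : lift p p ≫ uncurry φ = p ≫ f := by
    rw [← h2, Category.assoc, h1, ← Category.assoc, lift_fst]
  calc (lift p p ≫ uncurry φ) ≫ t
      = lift p p ≫ uncurry φ ≫ t := by rw [Category.assoc]
    _ = p ≫ f := by
        rw [hf, show lift p p = p ≫ lift (𝟙 A) (𝟙 A) by ext <;> simp]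
        simp only [Category.assoc]
    _ = lift p p ≫ uncurry φ := h3.symm
end

section
/- If a symmetric monoidal category admits natural transformations δ_A : A → A ⊗ A (copy) and ε_A : A → I (delete) making each object a commutative comonoid compatibly with the monoidal structure, then the monoidal structure is cartesian, i.e., A ⊗ B is a categorical product of A and B. -/
set_option maxHeartbeats 1000000

open CategoryTheory CategoryTheory.Limits CategoryTheory.MonoidalCategory

private lemma fox_shuffle {C : Type*} [Category C] [MonoidalCategory C] [SymmetricCategory C]
    (A B : C) (f : A ⟶ 𝟙_ C) (g : B ⟶ 𝟙_ C) :
    (α_ A A (B ⊗ B)).hom ≫ (𝟙 A ⊗ₘ (α_ A B B).inv) ≫ (𝟙 A ⊗ₘ ((β_ A B).hom ⊗ₘ 𝟙 B)) ≫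
      (𝟙 A ⊗ₘ (α_ B A B).hom) ≫ (α_ A B (A ⊗ B)).inv ≫
      (((𝟙 A ⊗ₘ g) ≫ (ρ_ A).hom) ⊗ₘ ((f ⊗ₘ 𝟙 B) ≫ (λ_ B).hom)) =
    (((𝟙 A ⊗ₘ f) ≫ (ρ_ A).hom) ⊗ₘ ((g ⊗ₘ 𝟙 B) ≫ (λ_ B).hom)) := by
  have hβ : (β_ A B).hom ≫ (g ⊗ₘ f) = (f ⊗ₘ g) ≫ (β_ (𝟙_ C) (𝟙_ C)).hom := by
    rw [BraidedCategory.braiding_naturality]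
  have hII : (β_ (𝟙_ C) (𝟙_ C)).hom = 𝟙 _ := by
    rw [braiding_tensorUnit_left, CategoryTheory.MonoidalCategory.unitors_equal]; simp
  calc (α_ A A (B ⊗ B)).hom ≫ (𝟙 A ⊗ₘ (α_ A B B).inv) ≫ (𝟙 A ⊗ₘ ((β_ A B).hom ⊗ₘ 𝟙 B)) ≫
      (𝟙 A ⊗ₘ (α_ B A B).hom) ≫ (α_ A B (A ⊗ B)).inv ≫
      (((𝟙 A ⊗ₘ g) ≫ (ρ_ A).hom) ⊗ₘ ((f ⊗ₘ 𝟙 B) ≫ (λ_ B).hom))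
      = (α_ A A (B ⊗ B)).hom ≫ (𝟙 A ⊗ₘ (α_ A B B).inv) ≫
        (𝟙 A ⊗ₘ (((β_ A B).hom ≫ (g ⊗ₘ f)) ⊗ₘ 𝟙 B)) ≫ (𝟙 A ⊗ₘ (α_ (𝟙_ C) (𝟙_ C) B).hom) ≫
        (α_ A (𝟙_ C) ((𝟙_ C) ⊗ B)).inv ≫ ((ρ_ A).hom ⊗ₘ (λ_ B).hom) := by
        monoidal
    _ = (α_ A A (B ⊗ B)).hom ≫ (𝟙 A ⊗ₘ (α_ A B B).inv) ≫
        (𝟙 A ⊗ₘ ((f ⊗ₘ g) ⊗ₘ 𝟙 B)) ≫ (𝟙 A ⊗ₘ (α_ (𝟙_ C) (𝟙_ C) B).hom) ≫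
        (α_ A (𝟙_ C) ((𝟙_ C) ⊗ B)).inv ≫ ((ρ_ A).hom ⊗ₘ (λ_ B).hom) := by
        rw [hβ, hII]; simp
    _ = (((𝟙 A ⊗ₘ f) ≫ (ρ_ A).hom) ⊗ₘ ((g ⊗ₘ 𝟙 B) ≫ (λ_ B).hom)) := by monoidal

/-- Fox's theorem (one direction): natural commutative comonoid structure on every
object of a symmetric monoidal category, compatible with the monoidal structure,
makes the tensor product a categorical product. -/
theorem fox_tensor_is_product {C : Type*} [Category C] [MonoidalCategory C]
    [SymmetricCategory C]
    (δ : ∀ A : C, A ⟶ A ⊗ A) (ε : ∀ A : C, A ⟶ 𝟙_ C)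
    (δ_nat : ∀ {A B : C} (f : A ⟶ B), f ≫ δ B = δ A ≫ (f ⊗ₘ f))
    (ε_nat : ∀ {A B : C} (f : A ⟶ B), f ≫ ε B = ε A)
    (coassoc : ∀ A : C, δ A ≫ (δ A ⊗ₘ 𝟙 A) ≫ (α_ A A A).hom = δ A ≫ (𝟙 A ⊗ₘ δ A))
    (counit_left : ∀ A : C, δ A ≫ (ε A ⊗ₘ 𝟙 A) ≫ (λ_ A).hom = 𝟙 A)
    (counit_right : ∀ A : C, δ A ≫ (𝟙 A ⊗ₘ ε A) ≫ (ρ_ A).hom = 𝟙 A)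
    (cocomm : ∀ A : C, δ A ≫ (β_ A A).hom = δ A)
    (δ_monoidal : ∀ A B : C,
      δ (A ⊗ B) =
        (δ A ⊗ₘ δ B) ≫ (α_ A A (B ⊗ B)).hom ≫
          (𝟙 A ⊗ₘ (α_ A B B).inv) ≫ (𝟙 A ⊗ₘ ((β_ A B).hom ⊗ₘ 𝟙 B)) ≫
          (𝟙 A ⊗ₘ (α_ B A B).hom) ≫ (α_ A B (A ⊗ B)).inv)
    (ε_monoidal : ∀ A B : C, ε (A ⊗ B) = (ε A ⊗ₘ ε B) ≫ (λ_ (𝟙_ C)).hom)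
    (A B : C) :
    Nonempty (IsLimit (BinaryFan.mk
      ((𝟙 A ⊗ₘ ε B) ≫ (ρ_ A).hom : A ⊗ B ⟶ A)
      ((ε A ⊗ₘ 𝟙 B) ≫ (λ_ B).hom : A ⊗ B ⟶ B))) := by
  set p₁ : A ⊗ B ⟶ A := (𝟙 A ⊗ₘ ε B) ≫ (ρ_ A).hom with hp₁
  set p₂ : A ⊗ B ⟶ B := (ε A ⊗ₘ 𝟙 B) ≫ (λ_ B).hom with hp₂
  -- key: δ (A ⊗ B) ≫ (p₁ ⊗ p₂) = 𝟙
  have key : δ (A ⊗ B) ≫ (p₁ ⊗ₘ p₂) = 𝟙 (A ⊗ B) := by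
    rw [δ_monoidal, hp₁, hp₂]
    simp only [Category.assoc]
    rw [fox_shuffle A B (ε A) (ε B)]
    have : ((𝟙 A ⊗ₘ ε A) ≫ (ρ_ A).hom ⊗ₘ (ε B ⊗ₘ 𝟙 B) ≫ (λ_ B).hom)
        = ((𝟙 A ⊗ₘ ε A) ≫ (ρ_ A).hom) ⊗ₘ ((ε B ⊗ₘ 𝟙 B) ≫ (λ_ B).hom) := rfl
    rw [tensorHom_comp_tensorHom]
    calc δ A ≫ (𝟙 A ⊗ₘ ε A) ≫ (ρ_ A).hom ⊗ₘ δ B ≫ (ε B ⊗ₘ 𝟙 B) ≫ (λ_ B).hom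
        = (δ A ≫ (𝟙 A ⊗ₘ ε A) ≫ (ρ_ A).hom) ⊗ₘ (δ B ≫ (ε B ⊗ₘ 𝟙 B) ≫ (λ_ B).hom) := rfl
      _ = 𝟙 A ⊗ₘ 𝟙 B := by rw [counit_right A, counit_left B]
      _ = 𝟙 (A ⊗ B) := id_tensorHom_id A B
  -- any morphism into A ⊗ B is determined by its projections
  have determined : ∀ {X : C} (m : X ⟶ A ⊗ B), m = δ X ≫ ((m ≫ p₁) ⊗ₘ (m ≫ p₂)) := by
    intro X m
    rw [← tensorHom_comp_tensorHom, ← Category.assoc, ← δ_nat m, Category.assoc, key, Category.comp_id]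
  have fac₁ : ∀ {X : C} (f : X ⟶ A) (g : X ⟶ B), δ X ≫ (f ⊗ₘ g) ≫ p₁ = f := by
    intro X f g
    rw [hp₁]
    have e1 : (f ⊗ₘ g) ≫ (𝟙 A ⊗ₘ ε B) = (𝟙 X ⊗ₘ ε X) ≫ (f ⊗ₘ 𝟙 (𝟙_ C)) := by
      rw [tensorHom_comp_tensorHom, tensorHom_comp_tensorHom, Category.comp_id, Category.id_comp,
        Category.comp_id, ε_nat g]
    rw [← Category.assoc (f ⊗ₘ g), e1]
    simp only [Category.assoc]
    rw [show (f ⊗ₘ 𝟙 (𝟙_ C)) ≫ (ρ_ A).hom = (ρ_ X).hom ≫ f from by simpa using rightUnitor_naturality f,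
      reassoc_of% counit_right X]
  have fac₂ : ∀ {X : C} (f : X ⟶ A) (g : X ⟶ B), δ X ≫ (f ⊗ₘ g) ≫ p₂ = g := by
    intro X f g
    rw [hp₂]
    have e1 : (f ⊗ₘ g) ≫ (ε A ⊗ₘ 𝟙 B) = (ε X ⊗ₘ 𝟙 X) ≫ (𝟙 (𝟙_ C) ⊗ₘ g) := by
      rw [tensorHom_comp_tensorHom, tensorHom_comp_tensorHom, Category.comp_id, Category.id_comp,
        Category.comp_id, ε_nat f]
    rw [← Category.assoc (f ⊗ₘ g), e1]
    simp only [Category.assoc]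
    rw [show (𝟙 (𝟙_ C) ⊗ₘ g) ≫ (λ_ B).hom = (λ_ X).hom ≫ g from by simpa using leftUnitor_naturality g,
      reassoc_of% counit_left X]
  exact ⟨BinaryFan.isLimitMk
    (fun s => δ s.pt ≫ (s.fst ⊗ₘ s.snd))
    (fun s => by simpa using fac₁ s.fst s.snd)
    (fun s => by simpa using fac₂ s.fst s.snd)
    (fun s m h1 h2 => by
      rw [determined m]
      rw [show m ≫ p₁ = s.fst from h1, show m ≫ p₂ = s.snd from h2])⟩
end
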